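/- Let {x_k} be a normalized complete minimal system, σ^m, σ ⊆ ℕ. Then P_{σ^m} → P_σ pointwise if and only if both σ^m → σ in the product topology on 𝔓(ℕ) and d_s(P_{σ^m}, 0) → d_s(P_σ, 0), where d_s(P, 0) = Σ_j ‖P x_j‖/2^j. -/

import Mathlib

open Filter Topology

set_option linter.unusedSectionVars false
set_option maxHeartbeats 1000000

noncomputable section

variable {H : Type*} [NormedAddCommGroup H] [InnerProductSpace ℂ H] [CompleteSpace H]

/-- Closed linear span of a set of vectors. -/
def clSpan (s : Set H) : Submodule ℂ H := (Submodule.span ℂ s).topologicalClosure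

instance (s : Set H) : CompleteSpace (clSpan s) :=
  (Submodule.isClosed_topologicalClosure _).completeSpace_coe

/-- Orthogonal projection onto the closed linear span of `s`, as a map `H → H`. -/
def projS (s : Set H) : H →L[ℂ] H :=
  (clSpan s).subtypeL ∘L Submodule.orthogonalProjectionOnto (clSpan s)

/-- The system `x` is complete: its closed linear span is all of `H`. -/
def IsCompleteSystem (x : ℕ → H) : Prop := clSpan (Set.range x) = ⊤

/-- The system `x` is minimal: no vector lies in the closed span of the others. -/
def IsMinimalSystem (x : ℕ → H) : Prop :=
  ∀ k, x k ∉ clSpan (x '' {j | j ≠ k})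

/-- `y` is biorthogonal to `x`. -/
def IsBiorthogonal (x y : ℕ → H) : Prop :=
  ∀ k j, (inner ℂ (x k) (y j) : ℂ) = if k = j then 1 else 0

lemma clSpan_mono {s t : Set H} (h : s ⊆ t) : clSpan s ≤ clSpan t :=
  Submodule.topologicalClosure_mono (Submodule.span_mono h)

lemma projS_mem (s : Set H) (v : H) : projS s v ∈ clSpan s :=
  (Submodule.orthogonalProjectionOnto (clSpan s) v).2

lemma projS_eq_self {s : Set H} {v : H} (h : v ∈ clSpan s) : projS s v = v :=
  Submodule.starProjection_eq_self_iff.2 h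

lemma projS_apply_of_mem_image (x : ℕ → H) {τ : Set ℕ} {k : ℕ} (hk : k ∈ τ) :
    projS (x '' τ) (x k) = x k :=
  projS_eq_self (Submodule.le_topologicalClosure _ (Submodule.subset_span ⟨k, hk, rfl⟩))

lemma norm_projS_le (s : Set H) (v : H) : ‖projS s v‖ ≤ ‖v‖ := by
  have h1 : ‖projS s v‖ = ‖Submodule.orthogonalProjectionOnto (clSpan s) v‖ := rfl
  rw [h1]
  calc ‖Submodule.orthogonalProjectionOnto (clSpan s) v‖ ≤ ‖Submodule.orthogonalProjectionOnto (clSpan s)‖ * ‖v‖ :=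
        (Submodule.orthogonalProjectionOnto (clSpan s)).le_opNorm v
    _ ≤ 1 * ‖v‖ := by
        have := Submodule.orthogonalProjectionOnto_norm_le (clSpan s)
        gcongr
    _ = ‖v‖ := one_mul _

lemma inner_projS {s : Set H} {u : H} (hu : u ∈ clSpan s) (v : H) :
    (inner ℂ (projS s v) u : ℂ) = inner ℂ v u := by
  have h0 : (inner ℂ u (v - projS s v) : ℂ) = 0 :=
    (Submodule.mem_orthogonal _ _).1 (Submodule.sub_starProjection_mem_orthogonal (K := clSpan s) v) u hu
  have h0' : (inner ℂ (v - projS s v) u : ℂ) = 0 := by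
    rw [← inner_conj_symm, h0, map_zero]
  rw [inner_sub_left] at h0'
  linear_combination -h0'

lemma abs_re_inner_le (a b : H) : |(inner ℂ a b : ℂ).re| ≤ ‖a‖ * ‖b‖ :=
  le_trans (Complex.abs_re_le_norm _) (norm_inner_le_norm a b)

lemma summable_projS (x : ℕ → H) (hnorm : ∀ k, ‖x k‖ = 1) (τ : Set ℕ) :
    Summable (fun j => ‖projS (x '' τ) (x j)‖ / 2 ^ j : ℕ → ℝ) := by
  apply Summable.of_nonneg_of_le (fun j => by positivity) (fun j => ?_) summable_geometric_two
  calc ‖projS (x '' τ) (x j)‖ / 2 ^ j ≤ 1 / 2 ^ j := by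
        gcongr
        exact le_of_le_of_eq (norm_projS_le _ _) (hnorm j)
    _ = (1 / 2 : ℝ) ^ j := by rw [div_pow, one_pow]

lemma eventually_mem_clSpan (x : ℕ → H) (σ' : ℕ → Set ℕ) (σ : Set ℕ)
    (hσ : ∀ n : ℕ, ∃ M : ℕ, ∀ m ≥ M, ∀ k ≤ n, (k ∈ σ' m ↔ k ∈ σ))
    {u : H} (hu : u ∈ Submodule.span ℂ (x '' σ)) :
    ∀ᶠ m in atTop, u ∈ clSpan (x '' σ' m) := by
  classical
  obtain ⟨T, hTs, hT⟩ := Submodule.mem_span_finite_of_mem_span hu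
  let idx : H → ℕ := fun t => if h : t ∈ x '' σ then h.choose else 0
  have hidx : ∀ t ∈ (T : Set H), idx t ∈ σ ∧ x (idx t) = t := by
    intro t ht
    have h' := hTs ht
    simp only [idx, dif_pos h']
    exact ⟨h'.choose_spec.1, h'.choose_spec.2⟩
  obtain ⟨M, hM⟩ := hσ (T.sup idx)
  rw [eventually_atTop]
  refine ⟨M, fun m hm => ?_⟩
  have hT' : (T : Set H) ⊆ x '' σ' m := by
    intro t ht
    obtain ⟨h1, h2⟩ := hidx t ht
    have hle : idx t ≤ T.sup idx := Finset.le_sup (by exact_mod_cast ht)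
    exact ⟨idx t, (hM m hm (idx t) hle).2 h1, h2⟩
  have : u ∈ Submodule.span ℂ (x '' σ' m) :=
    Submodule.span_mono hT' (by simpa using hT)
  exact Submodule.le_topologicalClosure _ this

lemma eventually_re_inner_ge (x : ℕ → H) (σ' : ℕ → Set ℕ) (σ : Set ℕ)
    (hσ : ∀ n : ℕ, ∃ M : ℕ, ∀ m ≥ M, ∀ k ≤ n, (k ∈ σ' m ↔ k ∈ σ))
    (k : ℕ) (hx : ‖x k‖ = 1) {η : ℝ} (hη : 0 < η) :
    ∀ᶠ m in atTop, ‖projS (x '' σ) (x k)‖ ^ 2 - η ≤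
      (inner ℂ (projS (x '' σ' m) (x k)) (projS (x '' σ) (x k)) : ℂ).re := by
  set q := projS (x '' σ) (x k) with hq
  have hqmem : q ∈ closure ((Submodule.span ℂ (x '' σ) : Submodule ℂ H) : Set H) := by
    have := projS_mem (x '' σ) (x k)
    rwa [← Submodule.topologicalClosure_coe]
  obtain ⟨u, huspan, hud⟩ := Metric.mem_closure_iff.1 hqmem (η / 2) (by positivity)
  filter_upwards [eventually_mem_clSpan x σ' σ hσ huspan] with m hm
  set p := projS (x '' σ' m) (x k) with hp
  have e1 : (inner ℂ p u : ℂ) = inner ℂ (x k) u := inner_projS hm (x k)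
  have e2 : (inner ℂ (x k) q : ℂ) = (‖q‖ : ℂ) ^ 2 := by
    rw [← inner_projS (projS_mem (x '' σ) (x k)) (x k), ← hq, inner_self_eq_norm_sq_to_K]
    norm_cast
  have split : (inner ℂ p q : ℂ).re =
      (inner ℂ (x k) q : ℂ).re + (inner ℂ (x k) (u - q) : ℂ).re + (inner ℂ p (q - u) : ℂ).re := by
    have h1 : (inner ℂ p q : ℂ) = inner ℂ p u + inner ℂ p (q - u) := by
      rw [inner_sub_right]; ring
    have h3 : (inner ℂ (x k) u : ℂ) = inner ℂ (x k) q + inner ℂ (x k) (u - q) := by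
      rw [inner_sub_right]; ring
    rw [h1, e1, h3]
    simp [Complex.add_re]
  have hre : (inner ℂ (x k) q : ℂ).re = ‖q‖ ^ 2 := by
    rw [e2, ← Complex.ofReal_pow, Complex.ofReal_re]
  have huq : ‖u - q‖ < η / 2 := by
    rw [← norm_sub_rev]
    rw [dist_eq_norm] at hud
    exact hud
  have b1 : |(inner ℂ (x k) (u - q) : ℂ).re| ≤ ‖x k‖ * ‖u - q‖ := abs_re_inner_le _ _
  have b2 : |(inner ℂ p (q - u) : ℂ).re| ≤ ‖p‖ * ‖q - u‖ := abs_re_inner_le _ _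
  have hpnorm : ‖p‖ ≤ 1 := le_of_le_of_eq (norm_projS_le _ _) hx
  have hqu : ‖q - u‖ = ‖u - q‖ := norm_sub_rev _ _
  rw [split, hre]
  rw [hx, one_mul] at b1
  rw [hqu] at b2
  have hb2 : |(inner ℂ p (q - u) : ℂ).re| ≤ ‖u - q‖ :=
    b2.trans (by nlinarith [norm_nonneg (u - q)])
  have := abs_le.1 b1
  have := abs_le.1 hb2
  linarith

lemma eventually_norm_ge (x : ℕ → H) (σ' : ℕ → Set ℕ) (σ : Set ℕ)
    (hσ : ∀ n : ℕ, ∃ M : ℕ, ∀ m ≥ M, ∀ k ≤ n, (k ∈ σ' m ↔ k ∈ σ))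
    (k : ℕ) (hx : ‖x k‖ = 1) {η : ℝ} (hη : 0 < η) :
    ∀ᶠ m in atTop, ‖projS (x '' σ) (x k)‖ - η ≤ ‖projS (x '' σ' m) (x k)‖ := by
  set c := ‖projS (x '' σ) (x k)‖ with hc
  rcases eq_or_lt_of_le (norm_nonneg (projS (x '' σ) (x k))) with h0 | h0
  · exact Eventually.of_forall fun m => by
      rw [hc, ← h0]; linarith [norm_nonneg (projS (x '' σ' m) (x k))]
  · filter_upwards [eventually_re_inner_ge x σ' σ hσ k hx (mul_pos h0 hη)] with m hm
    have hcs : (inner ℂ (projS (x '' σ' m) (x k)) (projS (x '' σ) (x k)) : ℂ).re ≤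
        ‖projS (x '' σ' m) (x k)‖ * c := by
      have := abs_re_inner_le (projS (x '' σ' m) (x k)) (projS (x '' σ) (x k))
      rw [← hc] at this
      exact (le_abs_self _).trans this
    rw [← hc] at hm
    nlinarith

lemma eventually_norm_le (x : ℕ → H) (σ' : ℕ → Set ℕ) (σ : Set ℕ)
    (hnorm : ∀ k, ‖x k‖ = 1)
    (hσ : ∀ n : ℕ, ∃ M : ℕ, ∀ m ≥ M, ∀ k ≤ n, (k ∈ σ' m ↔ k ∈ σ))
    (hd : Tendsto (fun m => ∑' j : ℕ, ‖projS (x '' σ' m) (x j)‖ / 2 ^ j) atTop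
      (𝓝 (∑' j : ℕ, ‖projS (x '' σ) (x j)‖ / 2 ^ j)))
    (k : ℕ) {ε : ℝ} (hε : 0 < ε) :
    ∀ᶠ m in atTop, ‖projS (x '' σ' m) (x k)‖ ≤ ‖projS (x '' σ) (x k)‖ + ε := by
  classical
  set F : ℕ → ℕ → ℝ := fun m j => ‖projS (x '' σ' m) (x j)‖ / 2 ^ j with hF
  set g : ℕ → ℝ := fun j => ‖projS (x '' σ) (x j)‖ / 2 ^ j with hg
  have hgs : Summable g := summable_projS x hnorm σ
  set S : ℝ := ∑' j, g j with hS
  have h2k : (0:ℝ) < 2 ^ k := by positivity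
  set δ : ℝ := ε / 2 ^ k with hδdef
  have hδ : 0 < δ := by positivity
  have htail : ∀ᶠ n in atTop, S - δ / 4 < ∑ j ∈ Finset.range n, g j :=
    hgs.hasSum.tendsto_sum_nat.eventually (eventually_gt_nhds (by linarith))
  obtain ⟨N, hN2⟩ := (htail.and (eventually_ge_atTop (k + 1))).exists
  obtain ⟨hN, hNk⟩ := hN2
  set J := Finset.range N with hJ
  have hkJ : k ∈ J := Finset.mem_range.2 (lt_of_lt_of_le (Nat.lt_succ_self k) hNk)
  have hNpos : (0:ℝ) < N := by
    have : 1 ≤ N := le_trans (Nat.le_add_left 1 k) hNk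
    exact_mod_cast Nat.lt_of_lt_of_le Nat.zero_lt_one this
  set c' : ℝ := δ / (4 * N) with hc'def
  have hc' : 0 < c' := by positivity
  have hB : ∀ᶠ m in atTop, ∀ j ∈ ((J.erase k : Finset ℕ) : Set ℕ), g j - c' ≤ F m j := by
    rw [eventually_all_finite (J.erase k).finite_toSet]
    intro j _
    have h2j : (0:ℝ) < 2 ^ j := by positivity
    filter_upwards [eventually_norm_ge x σ' σ hσ j (hnorm j) (mul_pos hc' h2j)] with m hm
    have e : g j * 2 ^ j = ‖projS (x '' σ) (x j)‖ := div_mul_cancel₀ _ h2j.ne'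
    simp only [hF]
    rw [le_div_iff₀ h2j]
    nlinarith
  have hA : ∀ᶠ m in atTop, (∑' j, F m j) < S + δ / 4 :=
    hd.eventually (eventually_lt_nhds (by linarith))
  filter_upwards [hA, hB] with m hAm hBm
  have hFs : Summable (F m) := summable_projS x hnorm (σ' m)
  have hsum_le : ∑ j ∈ J, F m j ≤ ∑' j, F m j :=
    Summable.sum_le_tsum J (fun j _ => by positivity) hFs
  have hsplitF : F m k + ∑ j ∈ J.erase k, F m j = ∑ j ∈ J, F m j :=
    Finset.add_sum_erase J (F m) hkJ
  have hsplitg : g k + ∑ j ∈ J.erase k, g j = ∑ j ∈ J, g j :=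
    Finset.add_sum_erase J g hkJ
  have hBsum : ∑ j ∈ J.erase k, (g j - c') ≤ ∑ j ∈ J.erase k, F m j :=
    Finset.sum_le_sum (fun j hj => hBm j (by exact_mod_cast hj))
  have hconst : ∑ j ∈ J.erase k, (g j - c') =
      (∑ j ∈ J.erase k, g j) - (J.erase k).card * c' := by
    rw [Finset.sum_sub_distrib, Finset.sum_const, nsmul_eq_mul]
  have hcardle : ((J.erase k).card : ℝ) ≤ (N : ℝ) := by
    have : (J.erase k).card ≤ J.card := Finset.card_erase_le
    have hJc : J.card = N := Finset.card_range N
    exact_mod_cast hJc ▸ this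
  have hcard : ((J.erase k).card : ℝ) * c' ≤ δ / 4 := by
    have h1 : ((J.erase k).card : ℝ) * c' ≤ (N : ℝ) * c' :=
      mul_le_mul_of_nonneg_right hcardle hc'.le
    have h2 : (N : ℝ) * c' = δ / 4 := by
      rw [hc'def]; field_simp
    linarith
  have hfk : F m k ≤ g k + 3 * (δ / 4) := by linarith
  have e1 : F m k * 2 ^ k = ‖projS (x '' σ' m) (x k)‖ := div_mul_cancel₀ _ h2k.ne'
  have e2 : g k * 2 ^ k = ‖projS (x '' σ) (x k)‖ := div_mul_cancel₀ _ h2k.ne'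
  have e3 : δ * 2 ^ k = ε := div_mul_cancel₀ _ h2k.ne'
  nlinarith [mul_le_mul_of_nonneg_right hfk h2k.le]

lemma tendsto_projS_basis (x : ℕ → H) (σ' : ℕ → Set ℕ) (σ : Set ℕ)
    (hnorm : ∀ k, ‖x k‖ = 1)
    (hσ : ∀ n : ℕ, ∃ M : ℕ, ∀ m ≥ M, ∀ k ≤ n, (k ∈ σ' m ↔ k ∈ σ))
    (hd : Tendsto (fun m => ∑' j : ℕ, ‖projS (x '' σ' m) (x j)‖ / 2 ^ j) atTop
      (𝓝 (∑' j : ℕ, ‖projS (x '' σ) (x j)‖ / 2 ^ j)))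
    (k : ℕ) :
    Tendsto (fun m => projS (x '' σ' m) (x k)) atTop (𝓝 (projS (x '' σ) (x k))) := by
  rw [Metric.tendsto_nhds]
  intro ε hε
  set q := projS (x '' σ) (x k) with hq
  set c := ‖q‖ with hc
  have hc0 : 0 ≤ c := norm_nonneg q
  have hc1 : c ≤ 1 := le_of_le_of_eq (norm_projS_le _ _) (hnorm k)
  set η : ℝ := min 1 (ε ^ 2 / 6) with hηdef
  have hηpos : 0 < η := lt_min one_pos (by positivity)
  have hη1 : η ≤ 1 := min_le_left _ _
  have hη2 : η ≤ ε ^ 2 / 6 := min_le_right _ _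
  filter_upwards [eventually_norm_le x σ' σ hnorm hσ hd k hηpos,
    eventually_re_inner_ge x σ' σ hσ k (hnorm k) hηpos] with m h1 h2
  set p := projS (x '' σ' m) (x k) with hp
  have hsq : dist p q ^ 2 = ‖p‖ ^ 2 - 2 * (inner ℂ p q : ℂ).re + c ^ 2 := by
    rw [dist_eq_norm]
    have := norm_sub_sq (𝕜 := ℂ) p q
    simpa using this
  have hp0 : 0 ≤ ‖p‖ := norm_nonneg p
  have hp1 : ‖p‖ * ‖p‖ ≤ (c + η) * (c + η) := mul_le_mul h1 h1 hp0 (by positivity)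
  have hp2 : η * η ≤ 1 * η := mul_le_mul_of_nonneg_right hη1 hηpos.le
  have hp3 : c * η ≤ 1 * η := mul_le_mul_of_nonneg_right hc1 hηpos.le
  have hd2 : dist p q ^ 2 < ε ^ 2 := by nlinarith
  have := dist_nonneg (x := p) (y := q)
  nlinarith

/-- `P_{σᵐ} → P_σ` pointwise iff `σᵐ → σ` in the product topology on `𝔓(ℕ)` and
`d_s(P_{σᵐ}, 0) → d_s(P_σ, 0)`, where `d_s(P, 0) = ∑_j ‖P x_j‖ / 2^j`. -/
theorem proj_pointwise_convergence_iff [TopologicalSpace.SeparableSpace H]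
    (x : ℕ → H) (hc : IsCompleteSystem x) (hmin : IsMinimalSystem x)
    (hnorm : ∀ k, ‖x k‖ = 1) (σ' : ℕ → Set ℕ) (σ : Set ℕ) :
    (∀ v : H, Tendsto (fun m => projS (x '' σ' m) v) atTop (𝓝 (projS (x '' σ) v))) ↔
      ((∀ n : ℕ, ∃ M : ℕ, ∀ m ≥ M, ∀ k ≤ n, (k ∈ σ' m ↔ k ∈ σ)) ∧
        Tendsto (fun m => ∑' j : ℕ, ‖projS (x '' σ' m) (x j)‖ / 2 ^ j) atTop
          (𝓝 (∑' j : ℕ, ‖projS (x '' σ) (x j)‖ / 2 ^ j))) := by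
  constructor
  · intro hP
    constructor
    · -- product topology convergence
      have gap : ∀ k : ℕ, ∃ δ > (0:ℝ), ∀ (τ : Set ℕ), k ∉ τ →
          ∀ w ∈ clSpan (x '' τ), δ ≤ ‖x k - w‖ := by
        intro k
        have hcl : IsClosed ((clSpan (x '' {j | j ≠ k}) : Submodule ℂ H) : Set H) :=
          Submodule.isClosed_topologicalClosure _
        obtain ⟨δ, hδ, hball⟩ := Metric.isOpen_iff.1 hcl.isOpen_compl (x k) (hmin k)
        refine ⟨δ, hδ, fun τ hkτ w hw => ?_⟩
        have hsub : x '' τ ⊆ x '' {j | j ≠ k} := by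
          apply Set.image_mono
          intro j hj
          rintro rfl
          exact hkτ hj
        have hwK : w ∈ clSpan (x '' {j | j ≠ k}) := clSpan_mono hsub hw
        by_contra hlt
        push_neg at hlt
        have hmem : w ∈ Metric.ball (x k) δ := by
          rw [Metric.mem_ball, dist_eq_norm, ← norm_sub_rev]
          exact hlt
        exact hball hmem hwK
      have hev : ∀ k, ∀ᶠ m in atTop, (k ∈ σ' m ↔ k ∈ σ) := by
        intro k
        by_cases hkσ : k ∈ σ
        · have hQ : projS (x '' σ) (x k) = x k := projS_apply_of_mem_image x hkσ
          obtain ⟨δ, hδ, hgap⟩ := gap k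
          have htd := hP (x k)
          rw [hQ] at htd
          have hev2 := Metric.tendsto_nhds.1 htd δ hδ
          filter_upwards [hev2] with m hm
          refine ⟨fun _ => hkσ, fun _ => ?_⟩
          by_contra hk'
          have hge := hgap (σ' m) hk' _ (projS_mem (x '' σ' m) (x k))
          rw [dist_eq_norm, ← norm_sub_rev] at hm
          linarith
        · have hxk : x k ∉ clSpan (x '' σ) := by
            intro hmem
            have hsub : x '' σ ⊆ x '' {j | j ≠ k} := by
              apply Set.image_mono
              intro j hj
              rintro rfl
              exact hkσ hj
            exact hmin k (clSpan_mono hsub hmem)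
          have hne : projS (x '' σ) (x k) ≠ x k := fun h => hxk (h ▸ projS_mem _ _)
          have hε : 0 < ‖x k - projS (x '' σ) (x k)‖ := by
            rw [norm_pos_iff]
            exact sub_ne_zero.2 (Ne.symm hne)
          filter_upwards [Metric.tendsto_nhds.1 (hP (x k)) _ hε] with m hm
          refine ⟨fun hk' => ?_, fun h => absurd h hkσ⟩
          exfalso
          rw [projS_apply_of_mem_image x hk', dist_eq_norm] at hm
          exact lt_irrefl _ hm
      intro n
      have hall := (eventually_all_finite (Set.finite_Iic n)).2 (fun k _ => hev k)
      rw [eventually_atTop] at hall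
      obtain ⟨M, hM⟩ := hall
      exact ⟨M, fun m hm k hk => hM m hm k (Set.mem_Iic.2 hk)⟩
    · -- tsum convergence by dominated convergence
      apply tendsto_tsum_of_dominated_convergence (bound := fun j => (1/2:ℝ)^j)
        summable_geometric_two
      · intro j
        exact ((hP (x j)).norm).div_const (2 ^ j)
      · apply Eventually.of_forall
        intro m j
        have h1 : (0:ℝ) ≤ ‖projS (x '' σ' m) (x j)‖ / 2 ^ j := by positivity
        rw [Real.norm_of_nonneg h1]
        calc ‖projS (x '' σ' m) (x j)‖ / 2 ^ j ≤ 1 / 2 ^ j := by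
              gcongr
              exact le_of_le_of_eq (norm_projS_le _ _) (hnorm j)
          _ = (1 / 2 : ℝ) ^ j := by rw [div_pow, one_pow]
  · rintro ⟨hσ, hd⟩
    set Sgood : Submodule ℂ H :=
      { carrier := {v | Tendsto (fun m => projS (x '' σ' m) v) atTop (𝓝 (projS (x '' σ) v))}
        add_mem' := fun {a b} ha hb => by
          have h := Tendsto.add ha hb
          simp only [Set.mem_setOf_eq, map_add]
          exact h
        zero_mem' := by
          simp only [Set.mem_setOf_eq, map_zero]
          exact tendsto_const_nhds
        smul_mem' := fun c v hv => by
          have h := hv.const_smul c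
          simp only [Set.mem_setOf_eq, map_smul]
          exact h } with hSgood
    have hclosed : IsClosed (Sgood : Set H) := by
      apply isClosed_of_closure_subset
      intro v hv
      show Tendsto (fun m => projS (x '' σ' m) v) atTop (𝓝 (projS (x '' σ) v))
      rw [Metric.tendsto_nhds]
      intro ε hε
      obtain ⟨w, hwS, hwd⟩ := Metric.mem_closure_iff.1 hv (ε/3) (by positivity)
      have hwT : Tendsto (fun m => projS (x '' σ' m) w) atTop (𝓝 (projS (x '' σ) w)) := hwS
      filter_upwards [Metric.tendsto_nhds.1 hwT (ε/3) (by positivity)] with m hm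
      have t1 : dist (projS (x '' σ' m) v) (projS (x '' σ' m) w) ≤ dist v w := by
        rw [dist_eq_norm, ← map_sub, dist_eq_norm]
        exact norm_projS_le _ _
      have t3 : dist (projS (x '' σ) w) (projS (x '' σ) v) ≤ dist w v := by
        rw [dist_eq_norm, ← map_sub, dist_eq_norm]
        exact norm_projS_le _ _
      have triangle := dist_triangle4 (projS (x '' σ' m) v) (projS (x '' σ' m) w)
        (projS (x '' σ) w) (projS (x '' σ) v)
      rw [dist_comm w v] at t3
      linarith
    have hspan : Submodule.span ℂ (Set.range x) ≤ Sgood := by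
      rw [Submodule.span_le]
      rintro _ ⟨k, rfl⟩
      exact tendsto_projS_basis x σ' σ hnorm hσ hd k
    have hc' : clSpan (Set.range x) = ⊤ := hc
    have htop : (⊤ : Submodule ℂ H) ≤ Sgood := by
      rw [← hc']
      exact Submodule.topologicalClosure_minimal _ hspan hclosed
    intro v
    exact htop Submodule.mem_top

end
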